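/- Let (X,L) be a quasi-polarized manifold of dimension 3 with h^0(K_X) = 0. Then the second sectional geometric genus satisfies g_2(X,L) = h^0(K_X + L) + h^2(O_X); in particular g_2(X,L) ≥ h^2(O_X) ≥ 0. -/

import Mathlib

/-- `C(t+j-1, j)` as a rational-valued function of an integer `t`
(the binomial basis polynomial used in the expansion of `χ(tL)`). -/
def ascBinom (t : ℤ) (j : ℕ) : ℚ :=
  (∏ i ∈ Finset.range j, ((t : ℚ) + i)) / (Nat.factorial j : ℚ)

/-- Abstract invariants of a quasi-polarized manifold `(X, L)` of dimension `n`: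
`X` a smooth complex projective variety and `L` a nef and big line bundle on `X`.
The fields record the standard cohomological invariants together with the
standard relations among them (binomial expansion of `χ(tL)`,
Kawamata–Viehweg vanishing plus Serre duality, connectedness). -/
structure QPolarized (n : ℕ) where
  /-- `h^q(X, 𝒪_X)` -/
  hq : ℕ → ℕ
  /-- `h^0(X, K_X + t L)`; in particular `h0adj 0 = h^0(K_X)` -/
  h0adj : ℕ → ℕ
  /-- the Euler–Poincaré characteristic `t ↦ χ(X, tL)` -/
  chi : ℤ → ℚ
  /-- the coefficients `χ_j(X, L)` of `χ(tL)` in the binomial basis `C(t+j-1, j)` -/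
  c : ℕ → ℚ
  /-- the degree `L^n` -/
  Ln : ℤ
  /-- the Kodaira dimension `κ(X)`, where `⊥` denotes `-∞` -/
  kappa : WithBot ℤ
  /-- the Iitaka–Kodaira dimension `κ(K_X + m L)`, where `⊥` denotes `-∞` -/
  kappaAdj : ℕ → WithBot ℤ
  /-- the dimension of the image of the Albanese map of `X` -/
  albImageDim : ℕ
  /-- the predicate "there exists a birational morphism `f : X → ℙ^n` such that
  `L = f^*(𝒪_{ℙ^n}(1))`" -/
  birationalToProjSpace : Prop
  /-- `χ(tL) = ∑_{j=0}^n χ_j(X,L) · C(t+j-1, j)` for all integers `t` -/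
  expansion : ∀ t : ℤ, chi t = ∑ j ∈ Finset.range (n + 1), c j * ascBinom t j
  /-- `χ(𝒪_X) = ∑_{q=0}^n (-1)^q h^q(𝒪_X)` -/
  chi_zero : chi 0 = ∑ q ∈ Finset.range (n + 1), (-1 : ℚ) ^ q * (hq q : ℚ)
  /-- Serre duality and Kawamata–Viehweg vanishing:
  `χ(-mL) = (-1)^n h^0(K_X + mL)` for every `m ≥ 1` -/
  serre : ∀ m : ℕ, 1 ≤ m → chi (-(m : ℤ)) = (-1 : ℚ) ^ n * (h0adj m : ℚ)
  /-- the top binomial coefficient of `χ(tL)` is the degree `L^n` -/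
  c_top : c n = (Ln : ℚ)
  /-- `X` is connected: `h^0(𝒪_X) = 1` -/
  h0_one : hq 0 = 1
  /-- Serre duality: `h^n(𝒪_X) = h^0(K_X)` -/
  serre_top : hq n = h0adj 0

namespace QPolarized

variable {n : ℕ}

/-- the `i`-th sectional geometric genus
`g_i(X,L) = (-1)^i (χ_{n-i}(X,L) - χ(𝒪_X)) + ∑_{j=0}^{n-i} (-1)^{n-i-j} h^{n-j}(𝒪_X)` -/
def g (X : QPolarized n) (i : ℕ) : ℚ :=
  (-1 : ℚ) ^ i * (X.c (n - i) - X.chi 0)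
    + ∑ j ∈ Finset.range (n - i + 1), (-1 : ℚ) ^ (n - i - j) * (X.hq (n - j) : ℚ)

/-- the iterated finite differences `F_i(t)` of `F_0 : t ↦ h^0(K_X + tL)`:
`F_i(t) = F_{i-1}(t+1) - F_{i-1}(t)` -/
def Fdiff (X : QPolarized n) : ℕ → ℕ → ℤ
  | 0 => fun t => (X.h0adj t : ℤ)
  | (i + 1) => fun t => X.Fdiff i (t + 1) - X.Fdiff i t

/-- the `i`-th Hilbert coefficient `A_i(X,L) = F_{n-i}(1)` -/
def A (X : QPolarized n) (i : ℕ) : ℤ := X.Fdiff (n - i) 1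

end QPolarized

/-- For a quasi-polarized manifold `(X,L)` of dimension `3` with
`h^0(K_X) = 0`, the second sectional geometric genus satisfies
`g_2(X,L) = h^0(K_X + L) + h^2(𝒪_X)`; in particular
`g_2(X,L) ≥ h^2(𝒪_X) ≥ 0`. -/
theorem g2_formula_dim3 (X : QPolarized 3) (h : X.h0adj 0 = 0) :
    X.g 2 = (X.h0adj 1 : ℚ) + (X.hq 2 : ℚ) ∧
      (X.hq 2 : ℚ) ≤ X.g 2 ∧ (0 : ℚ) ≤ X.g 2 := by
  have hs := X.serre 1 le_rfl
  have he1 := X.expansion (-1)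
  have he0 := X.expansion 0
  have htop := X.serre_top
  rw [h] at htop
  have key : X.g 2 = (X.h0adj 1 : ℚ) + (X.hq 2 : ℚ) := by
    simp only [QPolarized.g, ascBinom, Finset.sum_range_succ, Finset.sum_range_zero,
      Finset.prod_range_succ, Finset.prod_range_zero, Nat.factorial] at he1 he0 hs ⊢
    rw [htop] at *
    push_cast at *
    norm_num at he1 he0 hs ⊢
    linarith
  have h1 : (0:ℚ) ≤ X.h0adj 1 := Nat.cast_nonneg _
  have h2 : (0:ℚ) ≤ X.hq 2 := Nat.cast_nonneg _
  exact ⟨key, by rw [key]; linarith, by rw [key]; linarith⟩
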